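/- If H ∈ C(Ω̄ × Ω̄) with H(x,y) ≤ −H(y,x), then L_H** is Lipschitz on ℝ^N × ℝ^N with Lipschitz constant at most 4NR, and H_{L_H**} is Lipschitz on ℝ^N × ℝ^N with Lipschitz constant at most 4NR. -/

import Mathlib

open MeasureTheory Set

noncomputable section

variable {N : ℕ}

/-- `L_H(x,p) = sup_{y ∈ Ω̄} {⟨y,p⟩ - H(y,x)}`. -/
def LH (Ω : Set (EuclideanSpace ℝ (Fin N)))
    (H : EuclideanSpace ℝ (Fin N) → EuclideanSpace ℝ (Fin N) → ℝ)
    (x p : EuclideanSpace ℝ (Fin N)) : ℝ :=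
  ⨆ y : closure Ω, ((inner ℝ (y : EuclideanSpace ℝ (Fin N)) p : ℝ) - H y x)

/-- Restricted Fenchel dual `L_H*(q,y) = sup_{x ∈ Ω̄, p ∈ B_R} {⟨y,p⟩ + ⟨q,x⟩ - L_H(x,p)}`. -/
def LHstar (Ω : Set (EuclideanSpace ℝ (Fin N))) (R : ℝ)
    (H : EuclideanSpace ℝ (Fin N) → EuclideanSpace ℝ (Fin N) → ℝ)
    (q y : EuclideanSpace ℝ (Fin N)) : ℝ :=
  ⨆ x : closure Ω, ⨆ p : Metric.closedBall (0 : EuclideanSpace ℝ (Fin N)) R,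
    ((inner ℝ y (p : EuclideanSpace ℝ (Fin N)) : ℝ)
      + (inner ℝ q (x : EuclideanSpace ℝ (Fin N)) : ℝ) - LH Ω H x p)

/-- `L_H**(y,q) = sup_{x ∈ Ω̄, p ∈ B_R} {⟨y,p⟩ + ⟨q,x⟩ - L_H*(p,x)}`. -/
def LHstarstar (Ω : Set (EuclideanSpace ℝ (Fin N))) (R : ℝ)
    (H : EuclideanSpace ℝ (Fin N) → EuclideanSpace ℝ (Fin N) → ℝ)
    (y q : EuclideanSpace ℝ (Fin N)) : ℝ :=
  ⨆ x : closure Ω, ⨆ p : Metric.closedBall (0 : EuclideanSpace ℝ (Fin N)) R,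
    ((inner ℝ y (p : EuclideanSpace ℝ (Fin N)) : ℝ)
      + (inner ℝ q (x : EuclideanSpace ℝ (Fin N)) : ℝ) - LHstar Ω R H p x)

/-- The `B_R`-Hamiltonian of `L`: `H_L(x,y) = sup_{p ∈ B_R} {⟨x,p⟩ - L(y,p)}`. -/
def HLB (R : ℝ)
    (L : EuclideanSpace ℝ (Fin N) → EuclideanSpace ℝ (Fin N) → ℝ)
    (x y : EuclideanSpace ℝ (Fin N)) : ℝ :=
  ⨆ p : Metric.closedBall (0 : EuclideanSpace ℝ (Fin N)) R,
    ((inner ℝ x (p : EuclideanSpace ℝ (Fin N)) : ℝ) - L y p)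

end


section Helpers

private lemma bddAbove_of_forall_le {P : Type*} (g : P → ℝ) (B : ℝ)
    (h : ∀ p, g p ≤ B) : BddAbove (Set.range g) := by
  refine ⟨B, ?_⟩
  rintro r ⟨p, rfl⟩
  exact h p

private lemma ciSup_le_ciSup_add {P : Type*} [Nonempty P] (g h : P → ℝ) (c : ℝ)
    (hb : BddAbove (Set.range h)) (hle : ∀ p, g p ≤ h p + c) :
    (⨆ p, g p) ≤ (⨆ p, h p) + c :=
  ciSup_le fun p => (hle p).trans (by have := le_ciSup hb p; linarith)

private lemma abs_ciSup_sub_ciSup_le {P : Type*} [Nonempty P] (g h : P → ℝ) (c : ℝ)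
    (hbg : BddAbove (Set.range g)) (hbh : BddAbove (Set.range h))
    (hle : ∀ p, |g p - h p| ≤ c) :
    |(⨆ p, g p) - (⨆ p, h p)| ≤ c := by
  rw [abs_sub_le_iff]
  constructor
  · rw [sub_le_iff_le_add']
    exact ciSup_le_ciSup_add g h c hbh fun p => by
      have := (abs_sub_le_iff.mp (hle p)).1; linarith
  · rw [sub_le_iff_le_add']
    exact ciSup_le_ciSup_add h g c hbg fun p => by
      have := (abs_sub_le_iff.mp (hle p)).2; linarith

private lemma abs_ciSup2_sub_ciSup2_le {X P : Type*} [Nonempty X] [Nonempty P]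
    (g h : X → P → ℝ) (c : ℝ)
    (hbg : ∀ x, BddAbove (Set.range (g x))) (hbh : ∀ x, BddAbove (Set.range (h x)))
    (hbg2 : BddAbove (Set.range fun x => ⨆ p, g x p))
    (hbh2 : BddAbove (Set.range fun x => ⨆ p, h x p))
    (hle : ∀ x p, |g x p - h x p| ≤ c) :
    |(⨆ x, ⨆ p, g x p) - (⨆ x, ⨆ p, h x p)| ≤ c :=
  abs_ciSup_sub_ciSup_le _ _ c hbg2 hbh2 fun x =>
    abs_ciSup_sub_ciSup_le _ _ c (hbg x) (hbh x) (hle x)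

private lemma inner_diff_bound {N : ℕ} (R : ℝ) (hR : 0 ≤ R)
    (y₁ y₂ q₁ q₂ p x : EuclideanSpace ℝ (Fin N)) (hp : ‖p‖ ≤ R) (hx : ‖x‖ ≤ R) :
    |((inner ℝ y₁ p : ℝ) + (inner ℝ q₁ x : ℝ)) - ((inner ℝ y₂ p : ℝ) + (inner ℝ q₂ x : ℝ))|
      ≤ R * (‖y₁ - y₂‖ + ‖q₁ - q₂‖) := by
  have h1 : (inner ℝ y₁ p : ℝ) - inner ℝ y₂ p = inner ℝ (y₁ - y₂) p := (inner_sub_left _ _ _).symm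
  have h2 : (inner ℝ q₁ x : ℝ) - inner ℝ q₂ x = inner ℝ (q₁ - q₂) x := (inner_sub_left _ _ _).symm
  have key : ((inner ℝ y₁ p : ℝ) + (inner ℝ q₁ x : ℝ)) - ((inner ℝ y₂ p : ℝ) + (inner ℝ q₂ x : ℝ))
      = (inner ℝ (y₁ - y₂) p : ℝ) + (inner ℝ (q₁ - q₂) x : ℝ) := by
    rw [← h1, ← h2]; ring
  rw [key]
  have b1 : |(inner ℝ (y₁ - y₂) p : ℝ)| ≤ ‖y₁ - y₂‖ * ‖p‖ := abs_real_inner_le_norm _ _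
  have b2 : |(inner ℝ (q₁ - q₂) x : ℝ)| ≤ ‖q₁ - q₂‖ * ‖x‖ := abs_real_inner_le_norm _ _
  have := abs_add_le (inner ℝ (y₁ - y₂) p : ℝ) (inner ℝ (q₁ - q₂) x : ℝ)
  have n1 : (0:ℝ) ≤ ‖y₁ - y₂‖ := norm_nonneg _
  have n2 : (0:ℝ) ≤ ‖q₁ - q₂‖ := norm_nonneg _
  nlinarith [norm_nonneg p, norm_nonneg x]

end Helpers

/-- Lemma 2.9 (2): `L_H**` and `H_{L_H**}` are Lipschitz on `ℝ^N × ℝ^N` with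
Lipschitz constant at most `4NR`. -/
theorem LHstarstar_lipschitz {N : ℕ} (R : ℝ) (hR : 0 < R)
    (Ω : Set (EuclideanSpace ℝ (Fin N))) (hΩopen : IsOpen Ω)
    (hΩ : Ω ⊆ Metric.closedBall (0 : EuclideanSpace ℝ (Fin N)) R)
    (hΩne : Ω.Nonempty)
    (H : EuclideanSpace ℝ (Fin N) → EuclideanSpace ℝ (Fin N) → ℝ)
    (hHcont : ContinuousOn (fun q : EuclideanSpace ℝ (Fin N) × EuclideanSpace ℝ (Fin N) =>
      H q.1 q.2) ((closure Ω) ×ˢ (closure Ω)))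
    (hHskew : ∀ x ∈ closure Ω, ∀ y ∈ closure Ω, H x y ≤ - H y x) :
    (∀ x₁ p₁ x₂ p₂ : EuclideanSpace ℝ (Fin N),
      |LHstarstar Ω R H x₁ p₁ - LHstarstar Ω R H x₂ p₂|
        ≤ 4 * N * R * (‖x₁ - x₂‖ + ‖p₁ - p₂‖)) ∧
    (∀ x₁ y₁ x₂ y₂ : EuclideanSpace ℝ (Fin N),
      |HLB R (LHstarstar Ω R H) x₁ y₁ - HLB R (LHstarstar Ω R H) x₂ y₂|
        ≤ 4 * N * R * (‖x₁ - x₂‖ + ‖y₁ - y₂‖)) := by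
  classical
  have hRnn : (0:ℝ) ≤ R := hR.le
  have hclose : closure Ω ⊆ Metric.closedBall (0 : EuclideanSpace ℝ (Fin N)) R :=
    closure_minimal hΩ Metric.isClosed_closedBall
  have hΩcne : (closure Ω).Nonempty := hΩne.closure
  haveI hX : Nonempty (closure Ω) := hΩcne.to_subtype
  haveI hP : Nonempty (Metric.closedBall (0 : EuclideanSpace ℝ (Fin N)) R) :=
    ⟨⟨0, Metric.mem_closedBall_self hRnn⟩⟩
  have hxnorm : ∀ x : closure Ω, ‖(x : EuclideanSpace ℝ (Fin N))‖ ≤ R := fun x => by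
    have := hclose x.2
    simpa [Metric.mem_closedBall, dist_eq_norm] using this
  have hpnorm : ∀ p : Metric.closedBall (0 : EuclideanSpace ℝ (Fin N)) R,
      ‖(p : EuclideanSpace ℝ (Fin N))‖ ≤ R := fun p =>
    mem_closedBall_zero_iff.mp p.2
  have hK : IsCompact ((closure Ω) ×ˢ (closure Ω)) := by
    have h1 : IsCompact (closure Ω) :=
      (isCompact_closedBall (0 : EuclideanSpace ℝ (Fin N)) R).of_isClosed_subset
        isClosed_closure hclose
    exact h1.prod h1
  obtain ⟨M, hM⟩ : ∃ M : ℝ, ∀ x ∈ closure Ω, ∀ y ∈ closure Ω, |H x y| ≤ M := by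
    obtain ⟨C, hC⟩ := hK.exists_bound_of_continuousOn hHcont
    exact ⟨C, fun x hx y hy => by simpa [Real.norm_eq_abs] using hC (x, y) ⟨hx, hy⟩⟩
  -- bounds on LH
  have hLH_pt : ∀ (x : EuclideanSpace ℝ (Fin N)), x ∈ closure Ω →
      ∀ (p : EuclideanSpace ℝ (Fin N)) (y : closure Ω),
      ((inner ℝ (y : EuclideanSpace ℝ (Fin N)) p : ℝ) - H y x) ≤ R * ‖p‖ + M := by
    intro x hx p y
    have h1 : (inner ℝ (y : EuclideanSpace ℝ (Fin N)) p : ℝ)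
        ≤ ‖(y : EuclideanSpace ℝ (Fin N))‖ * ‖p‖ := real_inner_le_norm _ _
    have h2 := abs_le.mp (hM y y.2 x hx)
    have h3 := hxnorm y
    nlinarith [norm_nonneg p]
  have hLH_bdd : ∀ (x : EuclideanSpace ℝ (Fin N)), x ∈ closure Ω →
      ∀ (p : EuclideanSpace ℝ (Fin N)),
      BddAbove (Set.range fun y : closure Ω =>
        ((inner ℝ (y : EuclideanSpace ℝ (Fin N)) p : ℝ) - H y x)) :=
    fun x hx p => bddAbove_of_forall_le _ _ (hLH_pt x hx p)
  have hLH_le : ∀ x ∈ closure Ω, ∀ p, LH Ω H x p ≤ R * ‖p‖ + M :=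
    fun x hx p => ciSup_le (hLH_pt x hx p)
  have hLH_ge : ∀ x ∈ closure Ω, ∀ p, -(R * ‖p‖) - M ≤ LH Ω H x p := by
    intro x hx p
    obtain ⟨y0, hy0⟩ := hΩcne
    have h := le_ciSup (hLH_bdd x hx p) (⟨y0, hy0⟩ : closure Ω)
    have h1 := abs_le.mp (abs_real_inner_le_norm y0 p)
    have h2 := abs_le.mp (hM y0 hy0 x hx)
    have h3 := hxnorm (⟨y0, hy0⟩ : closure Ω)
    simp only at h
    unfold LH
    nlinarith [norm_nonneg p]
  -- bounds on LHstar
  have hLHstar_pt : ∀ (q y : EuclideanSpace ℝ (Fin N)) (x' : closure Ω)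
      (p' : Metric.closedBall (0 : EuclideanSpace ℝ (Fin N)) R),
      ((inner ℝ y (p' : EuclideanSpace ℝ (Fin N)) : ℝ)
        + (inner ℝ q (x' : EuclideanSpace ℝ (Fin N)) : ℝ) - LH Ω H x' p')
        ≤ ‖y‖ * R + ‖q‖ * R + (R * R + M) := by
    intro q y x' p'
    have h1 : (inner ℝ y (p' : EuclideanSpace ℝ (Fin N)) : ℝ)
        ≤ ‖y‖ * ‖(p' : EuclideanSpace ℝ (Fin N))‖ := real_inner_le_norm _ _
    have h2 : (inner ℝ q (x' : EuclideanSpace ℝ (Fin N)) : ℝ)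
        ≤ ‖q‖ * ‖(x' : EuclideanSpace ℝ (Fin N))‖ := real_inner_le_norm _ _
    have h3 := hLH_ge x' x'.2 (p' : EuclideanSpace ℝ (Fin N))
    have h4 := hpnorm p'
    have h5 := hxnorm x'
    nlinarith [norm_nonneg y, norm_nonneg q, norm_nonneg (p' : EuclideanSpace ℝ (Fin N))]
  have hLHstar_bddin : ∀ (q y : EuclideanSpace ℝ (Fin N)) (x' : closure Ω),
      BddAbove (Set.range fun p' : Metric.closedBall (0 : EuclideanSpace ℝ (Fin N)) R =>
        ((inner ℝ y (p' : EuclideanSpace ℝ (Fin N)) : ℝ)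
          + (inner ℝ q (x' : EuclideanSpace ℝ (Fin N)) : ℝ) - LH Ω H x' p')) :=
    fun q y x' => bddAbove_of_forall_le _ _ (hLHstar_pt q y x')
  have hLHstar_bddout : ∀ (q y : EuclideanSpace ℝ (Fin N)),
      BddAbove (Set.range fun x' : closure Ω =>
        ⨆ p' : Metric.closedBall (0 : EuclideanSpace ℝ (Fin N)) R,
        ((inner ℝ y (p' : EuclideanSpace ℝ (Fin N)) : ℝ)
          + (inner ℝ q (x' : EuclideanSpace ℝ (Fin N)) : ℝ) - LH Ω H x' p')) :=
    fun q y => bddAbove_of_forall_le _ (‖y‖ * R + ‖q‖ * R + (R * R + M))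
      (fun x' => ciSup_le (hLHstar_pt q y x'))
  have hLHstar_le : ∀ q y : EuclideanSpace ℝ (Fin N),
      LHstar Ω R H q y ≤ ‖y‖ * R + ‖q‖ * R + (R * R + M) :=
    fun q y => ciSup_le fun x' => ciSup_le (hLHstar_pt q y x')
  have hLHstar_ge : ∀ q y : EuclideanSpace ℝ (Fin N),
      -(‖q‖ * R) - M ≤ LHstar Ω R H q y := by
    intro q y
    obtain ⟨x0, hx0⟩ := hΩcne
    let p0 : Metric.closedBall (0 : EuclideanSpace ℝ (Fin N)) R :=
      ⟨0, Metric.mem_closedBall_self hRnn⟩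
    have h1 := le_ciSup (hLHstar_bddout q y) (⟨x0, hx0⟩ : closure Ω)
    have h2 := le_ciSup (hLHstar_bddin q y (⟨x0, hx0⟩ : closure Ω)) p0
    simp only [p0, inner_zero_right] at h1 h2
    have h4 := hLH_le x0 hx0 (0 : EuclideanSpace ℝ (Fin N))
    rw [norm_zero, mul_zero, zero_add] at h4
    have h5 := abs_le.mp (abs_real_inner_le_norm q x0)
    have h6 := hxnorm (⟨x0, hx0⟩ : closure Ω)
    simp only at h6
    have : -(‖q‖ * R) - M ≤ (0 : ℝ) + (inner ℝ q x0 : ℝ) - LH Ω H x0 0 := by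
      nlinarith [norm_nonneg q]
    calc -(‖q‖ * R) - M ≤ (0 : ℝ) + (inner ℝ q x0 : ℝ) - LH Ω H x0 0 := this
      _ ≤ _ := h2.trans h1
  -- bounds on LHstarstar terms
  have hLHss_pt : ∀ (y q : EuclideanSpace ℝ (Fin N)) (x' : closure Ω)
      (p' : Metric.closedBall (0 : EuclideanSpace ℝ (Fin N)) R),
      ((inner ℝ y (p' : EuclideanSpace ℝ (Fin N)) : ℝ)
        + (inner ℝ q (x' : EuclideanSpace ℝ (Fin N)) : ℝ)
        - LHstar Ω R H p' x')
        ≤ ‖y‖ * R + ‖q‖ * R + (R * R + M) := by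
    intro y q x' p'
    have h1 : (inner ℝ y (p' : EuclideanSpace ℝ (Fin N)) : ℝ)
        ≤ ‖y‖ * ‖(p' : EuclideanSpace ℝ (Fin N))‖ := real_inner_le_norm _ _
    have h2 : (inner ℝ q (x' : EuclideanSpace ℝ (Fin N)) : ℝ)
        ≤ ‖q‖ * ‖(x' : EuclideanSpace ℝ (Fin N))‖ := real_inner_le_norm _ _
    have h3 := hLHstar_ge (p' : EuclideanSpace ℝ (Fin N)) (x' : EuclideanSpace ℝ (Fin N))
    have h4 := hpnorm p'
    have h5 := hxnorm x'
    nlinarith [norm_nonneg y, norm_nonneg q, norm_nonneg (p' : EuclideanSpace ℝ (Fin N))]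
  have hLHss_bddin : ∀ (y q : EuclideanSpace ℝ (Fin N)) (x' : closure Ω),
      BddAbove (Set.range fun p' : Metric.closedBall (0 : EuclideanSpace ℝ (Fin N)) R =>
        ((inner ℝ y (p' : EuclideanSpace ℝ (Fin N)) : ℝ)
          + (inner ℝ q (x' : EuclideanSpace ℝ (Fin N)) : ℝ) - LHstar Ω R H p' x')) :=
    fun y q x' => bddAbove_of_forall_le _ _ (hLHss_pt y q x')
  have hLHss_bddout : ∀ (y q : EuclideanSpace ℝ (Fin N)),
      BddAbove (Set.range fun x' : closure Ω =>
        ⨆ p' : Metric.closedBall (0 : EuclideanSpace ℝ (Fin N)) R,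
        ((inner ℝ y (p' : EuclideanSpace ℝ (Fin N)) : ℝ)
          + (inner ℝ q (x' : EuclideanSpace ℝ (Fin N)) : ℝ) - LHstar Ω R H p' x')) :=
    fun y q => bddAbove_of_forall_le _ (‖y‖ * R + ‖q‖ * R + (R * R + M))
      (fun x' => ciSup_le (hLHss_pt y q x'))
  -- core Lipschitz estimate for LHstarstar with constant R
  have hcore : ∀ y₁ q₁ y₂ q₂ : EuclideanSpace ℝ (Fin N),
      |LHstarstar Ω R H y₁ q₁ - LHstarstar Ω R H y₂ q₂|
        ≤ R * (‖y₁ - y₂‖ + ‖q₁ - q₂‖) := by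
    intro y₁ q₁ y₂ q₂
    unfold LHstarstar
    refine abs_ciSup2_sub_ciSup2_le _ _ _ (hLHss_bddin y₁ q₁) (hLHss_bddin y₂ q₂)
      (hLHss_bddout y₁ q₁) (hLHss_bddout y₂ q₂) ?_
    intro x' p'
    have heq : ((inner ℝ y₁ (p' : EuclideanSpace ℝ (Fin N)) : ℝ)
          + (inner ℝ q₁ (x' : EuclideanSpace ℝ (Fin N)) : ℝ) - LHstar Ω R H p' x')
        - ((inner ℝ y₂ (p' : EuclideanSpace ℝ (Fin N)) : ℝ)
          + (inner ℝ q₂ (x' : EuclideanSpace ℝ (Fin N)) : ℝ) - LHstar Ω R H p' x')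
        = ((inner ℝ y₁ (p' : EuclideanSpace ℝ (Fin N)) : ℝ)
          + (inner ℝ q₁ (x' : EuclideanSpace ℝ (Fin N)) : ℝ))
        - ((inner ℝ y₂ (p' : EuclideanSpace ℝ (Fin N)) : ℝ)
          + (inner ℝ q₂ (x' : EuclideanSpace ℝ (Fin N)) : ℝ)) := by ring
    rw [heq]
    exact inner_diff_bound R hRnn y₁ y₂ q₁ q₂ _ _ (hpnorm p') (hxnorm x')
  -- Lipschitz estimate for HLB with constant R
  have hHLBbdd : ∀ (x y : EuclideanSpace ℝ (Fin N)),
      BddAbove (Set.range fun p : Metric.closedBall (0 : EuclideanSpace ℝ (Fin N)) R =>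
        ((inner ℝ x (p : EuclideanSpace ℝ (Fin N)) : ℝ) - LHstarstar Ω R H y p)) := by
    intro x y
    refine bddAbove_of_forall_le _ (‖x‖ * R + (R * R + (2 * (R * R) + M))) fun p => ?_
    have h1 : (inner ℝ x (p : EuclideanSpace ℝ (Fin N)) : ℝ)
        ≤ ‖x‖ * ‖(p : EuclideanSpace ℝ (Fin N))‖ := real_inner_le_norm _ _
    -- lower bound for LHstarstar y p
    obtain ⟨x0, hx0⟩ := hΩcne
    let p0 : Metric.closedBall (0 : EuclideanSpace ℝ (Fin N)) R :=
      ⟨0, Metric.mem_closedBall_self hRnn⟩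
    have g1 := le_ciSup (hLHss_bddout y (p : EuclideanSpace ℝ (Fin N)))
      (⟨x0, hx0⟩ : closure Ω)
    have g2 := le_ciSup (hLHss_bddin y (p : EuclideanSpace ℝ (Fin N))
      (⟨x0, hx0⟩ : closure Ω)) p0
    simp only [p0, inner_zero_right] at g1 g2
    have g4 := hLHstar_le (0 : EuclideanSpace ℝ (Fin N)) x0
    rw [norm_zero, zero_mul, add_zero] at g4
    have g5 := abs_le.mp (abs_real_inner_le_norm (p : EuclideanSpace ℝ (Fin N)) x0)
    have g6 := hxnorm (⟨x0, hx0⟩ : closure Ω)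
    simp only at g6
    have hlow : -(R * R) - (2 * (R * R) + M) ≤ LHstarstar Ω R H y (p : EuclideanSpace ℝ (Fin N)) := by
      have : -(R * R) - (2 * (R * R) + M)
          ≤ (0 : ℝ) + (inner ℝ (p : EuclideanSpace ℝ (Fin N)) x0 : ℝ) - LHstar Ω R H 0 x0 := by
        nlinarith [norm_nonneg (p : EuclideanSpace ℝ (Fin N)), hpnorm p]
      exact this.trans (g2.trans g1)
    have h4 := hpnorm p
    nlinarith [norm_nonneg x]
  have hHLBcore : ∀ x₁ y₁ x₂ y₂ : EuclideanSpace ℝ (Fin N),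
      |HLB R (LHstarstar Ω R H) x₁ y₁ - HLB R (LHstarstar Ω R H) x₂ y₂|
        ≤ R * (‖x₁ - x₂‖ + ‖y₁ - y₂‖) := by
    intro x₁ y₁ x₂ y₂
    unfold HLB
    refine abs_ciSup_sub_ciSup_le _ _ _ (hHLBbdd x₁ y₁) (hHLBbdd x₂ y₂) ?_
    intro p
    have heq : ((inner ℝ x₁ (p : EuclideanSpace ℝ (Fin N)) : ℝ) - LHstarstar Ω R H y₁ p)
        - ((inner ℝ x₂ (p : EuclideanSpace ℝ (Fin N)) : ℝ) - LHstarstar Ω R H y₂ p)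
        = ((inner ℝ x₁ (p : EuclideanSpace ℝ (Fin N)) : ℝ)
            - (inner ℝ x₂ (p : EuclideanSpace ℝ (Fin N)) : ℝ))
          + (LHstarstar Ω R H y₂ p - LHstarstar Ω R H y₁ p) := by ring
    rw [heq]
    have b1 : |(inner ℝ x₁ (p : EuclideanSpace ℝ (Fin N)) : ℝ)
        - (inner ℝ x₂ (p : EuclideanSpace ℝ (Fin N)) : ℝ)|
        ≤ ‖x₁ - x₂‖ * ‖(p : EuclideanSpace ℝ (Fin N))‖ := by
      rw [← inner_sub_left]
      exact abs_real_inner_le_norm _ _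
    have b2 : |LHstarstar Ω R H y₂ p - LHstarstar Ω R H y₁ p| ≤ R * ‖y₁ - y₂‖ := by
      have := hcore y₂ (p : EuclideanSpace ℝ (Fin N)) y₁ (p : EuclideanSpace ℝ (Fin N))
      rw [sub_self, norm_zero, add_zero, norm_sub_rev] at this
      exact this
    have := abs_add_le ((inner ℝ x₁ (p : EuclideanSpace ℝ (Fin N)) : ℝ)
        - (inner ℝ x₂ (p : EuclideanSpace ℝ (Fin N)) : ℝ))
      (LHstarstar Ω R H y₂ p - LHstarstar Ω R H y₁ p)
    have h4 := hpnorm p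
    nlinarith [norm_nonneg (x₁ - x₂), norm_nonneg (y₁ - y₂)]
  -- conclude
  rcases Nat.eq_zero_or_pos N with hN | hN
  · subst hN
    haveI : Subsingleton (EuclideanSpace ℝ (Fin 0)) :=
      ⟨fun a b => PiLp.ext fun i => i.elim0⟩
    constructor
    · intro a b c d
      rw [Subsingleton.elim a c, Subsingleton.elim b d, sub_self, abs_zero]
      positivity
    · intro a b c d
      rw [Subsingleton.elim a c, Subsingleton.elim b d, sub_self, abs_zero]
      positivity
  · have hN1 : (1 : ℝ) ≤ (N : ℝ) := by exact_mod_cast hN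
    constructor
    · intro x₁ p₁ x₂ p₂
      have h := hcore x₁ p₁ x₂ p₂
      have hs : (0:ℝ) ≤ ‖x₁ - x₂‖ + ‖p₁ - p₂‖ := by positivity
      nlinarith [mul_nonneg hRnn hs]
    · intro x₁ y₁ x₂ y₂
      have h := hHLBcore x₁ y₁ x₂ y₂
      have hs : (0:ℝ) ≤ ‖x₁ - x₂‖ + ‖y₁ - y₂‖ := by positivity
      nlinarith [mul_nonneg hRnn hs]
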